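/- arXiv:2404.15444 — 3 statements merged into one kernel-verified Lean document; each statement's English description precedes it below -/
import Mathlib

section
/- For every valid packing π of a finite family σ = (σ_1, …, σ_n) of jobs, ∫_ℝ ⌈‖s(σ, t)‖_∞⌉ dt ≤ cost(π), where s(σ, t) := ∑_{i : a_i ≤ t < f_i} s_i is the coordinatewise sum of the size vectors of the jobs active at time t and ⌈x⌉ denotes the ceiling of x. -/
open MeasureTheory Finset

/-- A `d`-dimensional job: arrival time `a`, finishing time `f` with `a < f`,
and a size vector `s ∈ [0,1]^d`. The job is active at time `t` iff `a ≤ t < f`. -/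
structure Job (d : ℕ) where
  a : ℝ
  f : ℝ
  s : Fin d → ℝ
  a_lt_f : a < f
  s_nonneg : ∀ j, 0 ≤ s j
  s_le_one : ∀ j, s j ≤ 1

/-- A packing `π` (assignment of jobs to servers) is valid if for every server `k`,
every time `t` and every coordinate `j`, the total size in coordinate `j` of the jobs
assigned to `k` and active at `t` is at most `1`. -/
def ValidPacking {d : ℕ} {ι : Type*} [Fintype ι] (σ : ι → Job d) (π : ι → ℕ) : Prop :=
  ∀ (k : ℕ) (t : ℝ) (j : Fin d),
    ∑ i ∈ Finset.univ.filter (fun i => π i = k ∧ (σ i).a ≤ t ∧ t < (σ i).f),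
      (σ i).s j ≤ 1

/-- The cost of a packing: for each server that is used, the difference between the
maximum finishing time and the minimum arrival time of the jobs assigned to it
(for a used server the corresponding set is finite and nonempty, so `sSup`/`sInf`
realize the maximum/minimum), summed over all used servers. -/
noncomputable def packCost {d : ℕ} {ι : Type*} [Fintype ι] [DecidableEq ι]
    (σ : ι → Job d) (π : ι → ℕ) : ℝ :=
  ∑ k ∈ Finset.univ.image π,
    (sSup ((fun i => (σ i).f) '' {i | π i = k}) -
      sInf ((fun i => (σ i).a) '' {i | π i = k}))

/-- For every valid packing `π` of a finite family `σ` of jobs,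
`∫_ℝ ⌈‖s(σ,t)‖_∞⌉ dt ≤ cost(π)`, where `s(σ,t)` is the coordinatewise sum of the
size vectors of the jobs active at time `t`. -/
theorem integral_ceil_norm_active_le_cost (d n : ℕ) (hd : 1 ≤ d)
    (σ : Fin n → Job d) (π : Fin n → ℕ) (hπ : ValidPacking σ π) :
    (∫ t : ℝ, (⌈⨆ j, ∑ i ∈ Finset.univ.filter
        (fun i => (σ i).a ≤ t ∧ t < (σ i).f), (σ i).s j⌉ : ℝ))
      ≤ packCost σ π := by
  classical
  haveI : Nonempty (Fin d) := ⟨⟨0, hd⟩⟩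
  set m : ℕ → ℝ := fun k => sInf ((fun i => (σ i).a) '' {i | π i = k}) with hm
  set M : ℕ → ℝ := fun k => sSup ((fun i => (σ i).f) '' {i | π i = k}) with hMdef
  have hmle : ∀ i : Fin n, m (π i) ≤ (σ i).a := fun i =>
    csInf_le ((Set.toFinite {i' | π i' = π i}).image _).bddBelow
      (Set.mem_image_of_mem _ rfl)
  have hMge : ∀ i : Fin n, (σ i).f ≤ M (π i) := fun i =>
    le_csSup ((Set.toFinite {i' | π i' = π i}).image _).bddAbove
      (Set.mem_image_of_mem _ rfl)
  -- the integrand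
  set S : Fin d → ℝ → ℝ := fun j t =>
    ∑ i ∈ Finset.univ.filter (fun i => (σ i).a ≤ t ∧ t < (σ i).f), (σ i).s j with hS
  set h : ℝ → ℝ := fun t => (⌈⨆ j, S j t⌉ : ℝ) with hh
  -- the dominating step function
  set g : ℝ → ℝ := fun t => ∑ k ∈ Finset.univ.image π,
    (Set.Ico (m k) (M k)).indicator (fun _ => (1 : ℝ)) t with hg
  have hind_int : ∀ k : ℕ,
      Integrable ((Set.Ico (m k) (M k)).indicator (fun _ => (1 : ℝ))) := by
    intro k
    refine (integrable_indicator_iff measurableSet_Ico).mpr ?_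
    exact integrableOn_const measure_Ico_lt_top.ne
  have hg_int : Integrable g :=
    integrable_finset_sum _ fun k _ => hind_int k
  -- pointwise bound
  have hS_nonneg : ∀ j t, 0 ≤ S j t := by
    intro j t
    exact Finset.sum_nonneg fun i _ => (σ i).s_nonneg j
  have hbound : ∀ t, h t ≤ g t := by
    intro t
    set A : Finset ℕ := (Finset.univ.image π).filter
      (fun k => m k ≤ t ∧ t < M k) with hA
    have hgA : g t = (A.card : ℝ) := by
      rw [hg]
      rw [Finset.card_filter]
      push_cast
      refine Finset.sum_congr rfl fun k _ => ?_
      by_cases hk : m k ≤ t ∧ t < M k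
      · simp [Set.indicator_apply, Set.mem_Ico, hk]
      · simp [Set.indicator_apply, Set.mem_Ico, hk]
    have hsup : (⨆ j, S j t) ≤ (A.card : ℝ) := by
      refine ciSup_le fun j => ?_
      have hmaps : ∀ i ∈ Finset.univ.filter
          (fun i => (σ i).a ≤ t ∧ t < (σ i).f), π i ∈ A := by
        intro i hi
        rw [Finset.mem_filter] at hi
        refine Finset.mem_filter.mpr ⟨Finset.mem_image_of_mem π (Finset.mem_univ i), ?_, ?_⟩
        · exact le_trans (hmle i) hi.2.1
        · exact lt_of_lt_of_le hi.2.2 (hMge i)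
      calc S j t = ∑ k ∈ A, ∑ i ∈ (Finset.univ.filter
            (fun i => (σ i).a ≤ t ∧ t < (σ i).f)).filter (fun i => π i = k),
            (σ i).s j := (Finset.sum_fiberwise_of_maps_to hmaps _).symm
        _ ≤ ∑ k ∈ A, 1 := by
            refine Finset.sum_le_sum fun k _ => ?_
            have : ((Finset.univ.filter
                (fun i => (σ i).a ≤ t ∧ t < (σ i).f)).filter (fun i => π i = k))
                = Finset.univ.filter
                  (fun i => π i = k ∧ (σ i).a ≤ t ∧ t < (σ i).f) := by
              rw [Finset.filter_filter]
              exact Finset.filter_congr fun i _ => by tauto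
            rw [this]
            exact hπ k t j
        _ = (A.card : ℝ) := by simp
    have hceil : (⌈⨆ j, S j t⌉ : ℤ) ≤ (A.card : ℤ) := by
      refine Int.ceil_le.mpr ?_
      push_cast
      exact hsup
    rw [hgA]
    calc h t = ((⌈⨆ j, S j t⌉ : ℤ) : ℝ) := rfl
      _ ≤ ((A.card : ℤ) : ℝ) := by exact_mod_cast hceil
      _ = (A.card : ℝ) := by push_cast; ring
  have hh_nonneg : ∀ t, 0 ≤ h t := by
    intro t
    have : (0 : ℝ) ≤ ⨆ j, S j t := by
      obtain ⟨j⟩ := ‹Nonempty (Fin d)›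
      exact le_trans (hS_nonneg j t)
        (le_ciSup (f := fun j => S j t) (Set.Finite.bddAbove (Set.finite_range _)) j)
    show (0 : ℝ) ≤ ((⌈⨆ j, S j t⌉ : ℤ) : ℝ)
    exact_mod_cast Int.ceil_nonneg this
  -- measurability of h
  have hS_meas : ∀ j, Measurable (S j) := by
    intro j
    have : S j = fun t => ∑ i : Fin n,
        if (σ i).a ≤ t ∧ t < (σ i).f then (σ i).s j else 0 := by
      funext t
      exact Finset.sum_filter _ _
    rw [this]
    refine Finset.measurable_sum _ fun i _ => ?_
    exact Measurable.ite measurableSet_Ico measurable_const measurable_const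
  have hh_meas : Measurable h := by
    refine Measurable.comp ?_ ((Measurable.iSup hS_meas).ceil)
    exact measurable_from_top
  have hh_int : Integrable h := by
    refine hg_int.mono' hh_meas.aestronglyMeasurable ?_
    filter_upwards with t
    rw [Real.norm_of_nonneg (hh_nonneg t)]
    exact hbound t
  have key : ∫ t, h t ≤ ∫ t, g t :=
    integral_mono hh_int hg_int hbound
  have hgval : ∫ t, g t = packCost σ π := by
    rw [hg, integral_finset_sum _ fun k _ => hind_int k, packCost]
    refine Finset.sum_congr rfl fun k hk => ?_
    obtain ⟨i, _, hi⟩ := Finset.mem_image.mp hk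
    have hmk : m k ≤ M k := by
      rw [← hi]
      exact le_trans (hmle i) (le_trans (le_of_lt (σ i).a_lt_f) (hMge i))
    rw [integral_indicator_const (1 : ℝ) measurableSet_Ico]
    rw [Real.volume_real_Ico_of_le hmk, smul_eq_mul, mul_one, hMdef, hm]
  rw [← hgval]
  exact key
end

section
/- For every valid packing π of a finite family σ = (σ_1, …, σ_n) of jobs, the total utilization satisfies util(σ) := ∑_{i=1}^n (f_i − a_i) · ‖s_i‖_∞ ≤ d · cost(π). -/
open MeasureTheory Finset

lemma indic_intble (a f A F c : ℝ) :
    IntervalIntegrable ((Set.Ico a f).indicator (fun _ => c)) volume A F := by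
  rw [intervalIntegrable_iff]
  exact (integrableOn_const measure_Ioc_lt_top.ne).indicator measurableSet_Ico

lemma indic_int (a f A F c : ℝ) (h1 : A ≤ a) (h2 : a ≤ f) (h3 : f ≤ F) :
    ∫ t in A..F, (Set.Ico a f).indicator (fun _ => c) t = (f - a) * c := by
  have hAF : A ≤ F := le_trans h1 (le_trans h2 h3)
  rw [intervalIntegral.integral_of_le hAF,
    MeasureTheory.setIntegral_indicator measurableSet_Ico, MeasureTheory.setIntegral_const]
  have hvol : volume (Set.Ioc A F ∩ Set.Ico a f) = ENNReal.ofReal (f - a) := by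
    apply le_antisymm
    · calc volume (Set.Ioc A F ∩ Set.Ico a f) ≤ volume (Set.Ico a f) :=
            measure_mono Set.inter_subset_right
        _ = ENNReal.ofReal (f - a) := Real.volume_Ico
    · calc ENNReal.ofReal (f - a) = volume (Set.Ioo a f) := Real.volume_Ioo.symm
        _ ≤ volume (Set.Ioc A F ∩ Set.Ico a f) := measure_mono (fun t ht =>
            ⟨⟨lt_of_le_of_lt h1 ht.1, le_trans (le_of_lt ht.2) h3⟩, le_of_lt ht.1, ht.2⟩)
  rw [measureReal_def, hvol, ENNReal.toReal_ofReal (by linarith), smul_eq_mul]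

lemma server_bound {d n : ℕ} (σ : Fin n → Job d) (j : Fin d) (S : Finset (Fin n))
    (hS : S.Nonempty) (A F : ℝ) (hA : ∀ i ∈ S, A ≤ (σ i).a) (hF : ∀ i ∈ S, (σ i).f ≤ F)
    (hbound : ∀ t : ℝ, ∑ i ∈ S.filter (fun i => (σ i).a ≤ t ∧ t < (σ i).f), (σ i).s j ≤ 1) :
    ∑ i ∈ S, ((σ i).f - (σ i).a) * (σ i).s j ≤ F - A := by
  classical
  obtain ⟨i₀, hi₀⟩ := hS
  have hAF : A ≤ F :=
    le_trans (hA i₀ hi₀) (le_trans (le_of_lt (σ i₀).a_lt_f) (hF i₀ hi₀))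
  have key : ∑ i ∈ S, ((σ i).f - (σ i).a) * (σ i).s j =
      ∫ t in A..F, ∑ i ∈ S, (Set.Ico (σ i).a (σ i).f).indicator (fun _ => (σ i).s j) t := by
    rw [intervalIntegral.integral_finset_sum (fun i _ => indic_intble _ _ _ _ _)]
    exact Finset.sum_congr rfl fun i hi =>
      (indic_int _ _ _ _ _ (hA i hi) (le_of_lt (σ i).a_lt_f) (hF i hi)).symm
  rw [key]
  have hle : ∫ t in A..F, ∑ i ∈ S, (Set.Ico (σ i).a (σ i).f).indicator (fun _ => (σ i).s j) t
      ≤ ∫ _ in A..F, (1 : ℝ) := by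
    refine intervalIntegral.integral_mono_on
      (f := fun t => ∑ i ∈ S, (Set.Ico (σ i).a (σ i).f).indicator (fun _ => (σ i).s j) t)
      (g := fun _ => (1 : ℝ)) hAF ?_ intervalIntegrable_const ?_
    · rw [show (fun t => ∑ i ∈ S, (Set.Ico (σ i).a (σ i).f).indicator (fun _ => (σ i).s j) t)
          = ∑ i ∈ S, (Set.Ico (σ i).a (σ i).f).indicator (fun _ => (σ i).s j) from
          funext fun t => (Finset.sum_apply t S _).symm]
      exact IntervalIntegrable.sum _ (fun i _ => indic_intble (σ i).a (σ i).f A F ((σ i).s j))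
    intro t _
    show ∑ i ∈ S, (Set.Ico (σ i).a (σ i).f).indicator (fun _ => (σ i).s j) t ≤ 1
    have heq : ∑ i ∈ S, (Set.Ico (σ i).a (σ i).f).indicator (fun _ => (σ i).s j) t =
        ∑ i ∈ S.filter (fun i => (σ i).a ≤ t ∧ t < (σ i).f), (σ i).s j := by
      rw [Finset.sum_filter]
      exact Finset.sum_congr rfl fun i _ => by
        simp [Set.indicator_apply, Set.mem_Ico]
    rw [heq]; exact hbound t
  simpa using hle

/-- For every valid packing `π` of a finite family `σ` of jobs, the total
utilization `util(σ) = ∑ i, (fᵢ - aᵢ) · ‖sᵢ‖_∞` is at most `d · cost(π)`. -/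
theorem util_le_dim_mul_cost (d n : ℕ) (hd : 1 ≤ d)
    (σ : Fin n → Job d) (π : Fin n → ℕ) (hπ : ValidPacking σ π) :
    ∑ i, ((σ i).f - (σ i).a) * (⨆ j, (σ i).s j) ≤ (d : ℝ) * packCost σ π := by
  classical
  haveI : Nonempty (Fin d) := ⟨⟨0, hd⟩⟩
  have step1 : ∑ i, ((σ i).f - (σ i).a) * (⨆ j, (σ i).s j) ≤
      ∑ j : Fin d, ∑ i, ((σ i).f - (σ i).a) * (σ i).s j := by
    rw [Finset.sum_comm]
    apply Finset.sum_le_sum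
    intro i _
    rw [← Finset.mul_sum]
    apply mul_le_mul_of_nonneg_left _ (by linarith [(σ i).a_lt_f])
    apply ciSup_le
    intro j
    exact Finset.single_le_sum (fun j' _ => (σ i).s_nonneg j') (Finset.mem_univ j)
  refine le_trans step1 ?_
  have step2 : ∀ j : Fin d, ∑ i, ((σ i).f - (σ i).a) * (σ i).s j ≤ packCost σ π := by
    intro j
    rw [← Finset.sum_fiberwise_of_maps_to (g := π) (fun i _ => Finset.mem_image_of_mem π (Finset.mem_univ i))]
    unfold packCost
    apply Finset.sum_le_sum
    intro k hk
    obtain ⟨i₀, _, hi₀⟩ := Finset.mem_image.1 hk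
    set S := Finset.univ.filter (fun i => π i = k) with hSdef
    have hSne : S.Nonempty := ⟨i₀, by simp [hSdef, hi₀]⟩
    have hsetfin : ({i | π i = k} : Set (Fin n)).Finite := Set.toFinite _
    have hA : ∀ i ∈ S, sInf ((fun i => (σ i).a) '' {i | π i = k}) ≤ (σ i).a := by
      intro i hi
      apply csInf_le (Set.Finite.bddBelow (hsetfin.image _))
      exact ⟨i, by simpa [hSdef] using hi, rfl⟩
    have hF : ∀ i ∈ S, (σ i).f ≤ sSup ((fun i => (σ i).f) '' {i | π i = k}) := by
      intro i hi
      apply le_csSup (Set.Finite.bddAbove (hsetfin.image _))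
      exact ⟨i, by simpa [hSdef] using hi, rfl⟩
    apply server_bound σ j S hSne _ _ hA hF
    intro t
    have := hπ k t j
    rw [hSdef, Finset.filter_filter]
    exact this
  calc ∑ j : Fin d, ∑ i, ((σ i).f - (σ i).a) * (σ i).s j
      ≤ ∑ _j : Fin d, packCost σ π := Finset.sum_le_sum fun j _ => step2 j
    _ = (d : ℝ) * packCost σ π := by simp [Finset.sum_const, mul_comm]
end

section
/- Let μ ≥ 1 and T > 0, let a_1, …, a_n ∈ [0, T) be arrival times and s_1, …, s_n ∈ ℝ^d nonnegative size vectors, and let N : ℝ → ℝ be a nonnegative measurable function satisfying N(t) ≤ s_∞(σ, t−2μ, t) + s_∞(σ, t−μ, t) + 1 for every t ∈ [0, T). Then ∫_0^T N(t) dt ≤ 3μ · ∑_{i=1}^n ‖s_i‖_∞ + T. -/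
open MeasureTheory

/-- Let `μ ≥ 1`, `T > 0`, arrival times `a i ∈ [0, T)`, nonnegative size
vectors `s i ∈ ℝ^d`, and let `N : ℝ → ℝ` be a nonnegative measurable function with
`N t ≤ s_∞(σ, t-2μ, t) + s_∞(σ, t-μ, t) + 1` for every `t ∈ [0, T)`, where
`s_∞(σ, t', t) = ∑_{i : t' < a i < t} ‖s i‖_∞`. Then
`∫_0^T N(t) dt ≤ 3μ · ∑ i, ‖s i‖_∞ + T`. -/
theorem integral_N_le (d n : ℕ) (μ T : ℝ) (hμ : 1 ≤ μ) (hT : 0 < T)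
    (a : Fin n → ℝ) (ha : ∀ i, a i ∈ Set.Ico (0 : ℝ) T)
    (s : Fin n → Fin d → ℝ) (hs : ∀ i j, 0 ≤ s i j)
    (N : ℝ → ℝ) (hN0 : ∀ t, 0 ≤ N t) (hNmeas : Measurable N)
    (hNle : ∀ t ∈ Set.Ico (0 : ℝ) T,
      N t ≤ (∑ i ∈ Finset.univ.filter (fun i => t - 2*μ < a i ∧ a i < t), ⨆ j, s i j)
          + (∑ i ∈ Finset.univ.filter (fun i => t - μ < a i ∧ a i < t), ⨆ j, s i j)
          + 1) :
    (∫ t in (0:ℝ)..T, N t) ≤ 3 * μ * (∑ i, ⨆ j, s i j) + T := by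
  set v : Fin n → ℝ := fun i => ⨆ j, s i j with hv_def
  have hv : ∀ i, 0 ≤ v i := fun i => Real.iSup_nonneg (hs i)
  set g : ℝ → ℝ := fun t =>
      (∑ i, Set.indicator (Set.Ioo (a i) (a i + 2*μ)) (fun _ => v i) t)
      + ((∑ i, Set.indicator (Set.Ioo (a i) (a i + μ)) (fun _ => v i) t) + 1) with hg_def
  have hμIoc : volume (Set.Ioc (0:ℝ) T) < ⊤ := measure_Ioc_lt_top
  have hconst : ∀ c : ℝ, IntegrableOn (fun _ => c) (Set.Ioc (0:ℝ) T) volume :=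
    fun c => integrableOn_const hμIoc.ne
  have hint_ind : ∀ (c b e : ℝ),
      IntegrableOn (Set.indicator (Set.Ioo b e) (fun _ => c)) (Set.Ioc (0:ℝ) T) volume :=
    fun c b e => (hconst c).indicator measurableSet_Ioo
  have hsum1_int : IntegrableOn
      (fun t => ∑ i, Set.indicator (Set.Ioo (a i) (a i + 2*μ)) (fun _ => v i) t)
      (Set.Ioc (0:ℝ) T) volume := integrable_finset_sum _ (fun i _ => hint_ind _ _ _)
  have hsum2_int : IntegrableOn
      (fun t => ∑ i, Set.indicator (Set.Ioo (a i) (a i + μ)) (fun _ => v i) t)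
      (Set.Ioc (0:ℝ) T) volume := integrable_finset_sum _ (fun i _ => hint_ind _ _ _)
  have h23 : IntegrableOn
      (fun t => (∑ i, Set.indicator (Set.Ioo (a i) (a i + μ)) (fun _ => v i) t) + 1)
      (Set.Ioc (0:ℝ) T) volume := hsum2_int.add (hconst 1)
  have hg_int : IntegrableOn g (Set.Ioc (0:ℝ) T) volume := by
    rw [hg_def]
    exact hsum1_int.add h23
  -- pointwise bound on [0,T)
  have hbound : ∀ t ∈ Set.Ico (0:ℝ) T, N t ≤ g t := by
    intro t ht
    refine (hNle t ht).trans ?_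
    have e1 : ∑ i ∈ Finset.univ.filter (fun i => t - 2*μ < a i ∧ a i < t), v i
        = ∑ i, Set.indicator (Set.Ioo (a i) (a i + 2*μ)) (fun _ => v i) t := by
      rw [Finset.sum_filter]
      refine Finset.sum_congr rfl fun i _ => ?_
      simp only [Set.indicator_apply, Set.mem_Ioo]
      have hiff : (t - 2*μ < a i ∧ a i < t) ↔ (a i < t ∧ t < a i + 2*μ) := by
        constructor <;> rintro ⟨h1, h2⟩ <;> constructor <;> linarith
      rw [if_congr hiff rfl rfl]
    have e2 : ∑ i ∈ Finset.univ.filter (fun i => t - μ < a i ∧ a i < t), v i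
        = ∑ i, Set.indicator (Set.Ioo (a i) (a i + μ)) (fun _ => v i) t := by
      rw [Finset.sum_filter]
      refine Finset.sum_congr rfl fun i _ => ?_
      simp only [Set.indicator_apply, Set.mem_Ioo]
      have hiff : (t - μ < a i ∧ a i < t) ↔ (a i < t ∧ t < a i + μ) := by
        constructor <;> rintro ⟨h1, h2⟩ <;> constructor <;> linarith
      rw [if_congr hiff rfl rfl]
    rw [hg_def]
    simp only []
    rw [e1, e2]
    exact le_of_eq (by ring)
  have hae : ∀ᵐ t ∂(volume.restrict (Set.Ioc (0:ℝ) T)), N t ≤ g t := by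
    have h1 : ∀ᵐ t ∂(volume.restrict (Set.Ioc (0:ℝ) T)), t ∈ Set.Ioc (0:ℝ) T :=
      ae_restrict_mem measurableSet_Ioc
    have h2 : ∀ᵐ (t : ℝ), t ≠ T := by
      have h0 : volume ({T} : Set ℝ) = 0 := Real.volume_singleton
      rw [ae_iff]
      simpa using h0
    filter_upwards [h1, ae_restrict_of_ae h2] with t ht htne
    exact hbound t ⟨ht.1.le, lt_of_le_of_ne ht.2 htne⟩
  have hN_int : IntegrableOn N (Set.Ioc (0:ℝ) T) volume := by
    refine Integrable.mono' hg_int hNmeas.aestronglyMeasurable ?_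
    filter_upwards [hae] with t ht
    rw [Real.norm_eq_abs, abs_of_nonneg (hN0 t)]
    exact ht
  have key : (∫ t in Set.Ioc (0:ℝ) T, N t) ≤ ∫ t in Set.Ioc (0:ℝ) T, g t :=
    integral_mono_ae hN_int hg_int hae
  -- evaluate/bound the integral of each indicator
  have hind : ∀ (c b L : ℝ), 0 ≤ c → 0 ≤ L →
      (∫ t in Set.Ioc (0:ℝ) T, Set.indicator (Set.Ioo b (b+L)) (fun _ => c) t) ≤ L * c := by
    intro c b L hc hL
    rw [setIntegral_indicator measurableSet_Ioo, setIntegral_const, smul_eq_mul]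
    have h1 : volume (Set.Ioc (0:ℝ) T ∩ Set.Ioo b (b+L)) ≤ ENNReal.ofReal L := by
      refine le_trans (measure_mono Set.inter_subset_right) ?_
      rw [Real.volume_Ioo]
      simp
    have h2 : (volume (Set.Ioc (0:ℝ) T ∩ Set.Ioo b (b+L))).toReal ≤ L :=
      ENNReal.toReal_le_of_le_ofReal hL h1
    exact mul_le_mul_of_nonneg_right h2 hc
  have hμ0 : (0:ℝ) ≤ μ := le_trans zero_le_one hμ
  have h2μ0 : (0:ℝ) ≤ 2*μ := by linarith
  have hone : (∫ _ in Set.Ioc (0:ℝ) T, (1:ℝ)) = T := by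
    rw [setIntegral_const, smul_eq_mul, mul_one, measureReal_def, Real.volume_Ioc, sub_zero,
      ENNReal.toReal_ofReal hT.le]
  have hg_eval : (∫ t in Set.Ioc (0:ℝ) T, g t)
      ≤ (∑ i, 2*μ * v i) + ((∑ i, μ * v i) + T) := by
    rw [hg_def]
    beta_reduce
    rw [integral_add hsum1_int h23]
    rw [integral_add hsum2_int (hconst 1), integral_finset_sum _ (fun i _ => hint_ind _ _ _),
      integral_finset_sum _ (fun i _ => hint_ind _ _ _), hone]
    gcongr with i _ i _
    · exact hind _ _ _ (hv i) h2μ0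
    · exact hind _ _ _ (hv i) hμ0
  have hfin : (∑ i, 2*μ * v i) + ((∑ i, μ * v i) + T) = 3 * μ * (∑ i, v i) + T := by
    rw [← Finset.mul_sum, ← Finset.mul_sum]
    ring
  rw [intervalIntegral.integral_of_le hT.le]
  calc (∫ t in Set.Ioc (0:ℝ) T, N t) ≤ ∫ t in Set.Ioc (0:ℝ) T, g t := key
    _ ≤ (∑ i, 2*μ * v i) + ((∑ i, μ * v i) + T) := hg_eval
    _ = 3 * μ * (∑ i, v i) + T := hfin
end
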